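/- The Jung constant of the quotient Banach space ℓ∞/c0 equals 2; more precisely, for every r < 1 there exists a subset A of ℓ∞/c0 of diameter at most 1 that is not contained in any closed ball of radius r. -/

import Mathlib

open Filter

/-- `c₀`: the subspace of `ℓ∞` of real sequences converging to `0`. -/
noncomputable def c0 : Submodule ℝ (lp (fun _ : ℕ => ℝ) ⊤) where
  carrier := {f | Tendsto (⇑f) atTop (nhds 0)}
  add_mem' := by
    intro f g hf hg
    show Tendsto (⇑(f + g)) atTop (nhds 0)
    have hadd : ⇑(f + g) = ⇑f + ⇑g := lp.coeFn_add f g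
    rw [hadd]
    have h2 := hf.add hg
    rw [add_zero] at h2
    exact h2
  zero_mem' := by
    have h0 : ⇑(0 : lp (fun _ : ℕ => ℝ) ⊤) = (0 : ∀ _ : ℕ, ℝ) := lp.coeFn_zero _ _
    show Tendsto _ atTop (nhds 0)
    rw [h0]
    exact tendsto_const_nhds
  smul_mem' := by
    intro c f hf
    show Tendsto (⇑(c • f)) atTop (nhds 0)
    have hsmul : ⇑(c • f) = c • ⇑f := lp.coeFn_smul c f
    rw [hsmul]
    have h2 := hf.const_smul c
    rw [smul_zero] at h2
    exact h2

/-- The (Chebyshev) radius of a subset of a normed space: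
`r(A) = inf_{b ∈ X} sup_{a ∈ A} ‖a − b‖`. -/
noncomputable def radius {X : Type} [SeminormedAddCommGroup X] (A : Set X) : ℝ :=
  ⨅ b : X, ⨆ a : A, ‖(a : X) - b‖

/-- The Jung constant `J(X) = sup {2 r(A)/δ(A) : A closed bounded, δ(A) > 0}`. -/
noncomputable def Jung (X : Type) [SeminormedAddCommGroup X] : ℝ :=
  sSup {c : ℝ | ∃ A : Set X, IsClosed A ∧ Bornology.IsBounded A ∧
    0 < Metric.diam A ∧ c = 2 * radius A / Metric.diam A}

namespace JungAux

/-- The finite string of the first `n` values of `x`. -/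
def str (x : ℕ → Bool) : ℕ → List Bool
  | 0 => []
  | n + 1 => str x n ++ [x n]

lemma str_length (x : ℕ → Bool) (n : ℕ) : (str x n).length = n := by
  induction n with
  | zero => rfl
  | succ n ih => simp [str, ih]

lemma str_agree {x y : ℕ → Bool} {n : ℕ} (h : ∀ i < n, x i = y i) : str x n = str y n := by
  induction n with
  | zero => rfl
  | succ n ih =>
      simp only [str]
      rw [ih fun i hi => h i (Nat.lt_succ_of_lt hi), h n (Nat.lt_succ_self n)]

lemma agree_of_str {x y : ℕ → Bool} {n : ℕ} (h : str x n = str y n) : ∀ i < n, x i = y i := by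
  induction n with
  | zero => intro i hi; omega
  | succ n ih =>
      have h' := List.append_inj' h (by simp)
      intro i hi
      rcases Nat.lt_succ_iff_lt_or_eq.1 hi with hi | rfl
      · exact ih h'.1 i hi
      · simpa using h'.2

/-- The code of the `n`-th initial segment of `x`. -/
def code (x : ℕ → Bool) (n : ℕ) : ℕ := Encodable.encode (str x n)

lemma code_inj {x : ℕ → Bool} : Function.Injective (code x) := fun n m h => by
  have h1 : str x n = str x m := Encodable.encode_injective h
  have := congrArg List.length h1
  simpa [str_length] using this

lemma eventually_code_ge (x : ℕ → Bool) (m : ℕ) : ∃ N, ∀ n, N ≤ n → m ≤ code x n := by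
  have hfin : {n | code x n < m}.Finite :=
    Set.Finite.preimage code_inj.injOn (Set.finite_Iio m)
  obtain ⟨N, hN⟩ := hfin.bddAbove
  refine ⟨N + 1, fun n hn => ?_⟩
  by_contra hlt
  have : n ≤ N := hN (by simpa using Nat.lt_of_not_le hlt)
  omega

/-- `D x` : `x` takes the value `true` infinitely often. -/
def D (x : ℕ → Bool) : Prop := ∀ m, ∃ n, m ≤ n ∧ x n = true

/-- The key diagonalization: no predicate on strings can "separate" the branches with
infinitely many `true`s from the branches with finitely many ones. -/
lemma combinatorial (Q : List Bool → Prop)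
    (H1 : ∀ x : ℕ → Bool, D x → ∃ N, ∀ n, N ≤ n → Q (str x n))
    (H2 : ∀ x : ℕ → Bool, ¬ D x → ∃ N, ∀ n, N ≤ n → ¬ Q (str x n)) : False := by
  -- Step: we can always extend any finite condition, avoid Q, and place a `true`.
  have star : ∀ (x : ℕ → Bool) (m : ℕ), ∃ p : (ℕ → Bool) × ℕ,
      (m + 1 ≤ p.2) ∧ (∀ i, i < m → p.1 i = x i) ∧ p.1 m = true ∧ ¬ Q (str p.1 p.2) := by
    intro x m
    set z : ℕ → Bool := fun i => if i < m then x i else if i = m then true else false with hz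
    have hzD : ¬ D z := by
      intro hD
      obtain ⟨n, hn, htrue⟩ := hD (m + 1)
      have h1 : ¬ n < m := by omega
      have h2 : ¬ n = m := by omega
      have : z n = false := by simp [hz, h1, h2]
      rw [this] at htrue; exact Bool.false_ne_true htrue
    obtain ⟨N, hN⟩ := H2 z hzD
    refine ⟨⟨z, max (m + 1) N⟩, le_max_left _ _, ?_, ?_, hN _ (le_max_right _ _)⟩
    · intro i hi; simp [hz, hi]
    · simp [hz]
  -- iterate the step
  let step : (ℕ → Bool) × ℕ → (ℕ → Bool) × ℕ := fun p => (star p.1 p.2).choose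
  let g : ℕ → (ℕ → Bool) × ℕ := fun k => step^[k] (fun _ => false, 0)
  have hg : ∀ k, g (k + 1) = step (g k) := by
    intro k
    show step^[k+1] _ = _
    rw [Function.iterate_succ_apply']
  have P1 : ∀ k, (g k).2 + 1 ≤ (g (k + 1)).2 := by
    intro k; rw [hg k]; exact (star (g k).1 (g k).2).choose_spec.1
  have P2 : ∀ k i, i < (g k).2 → (g (k + 1)).1 i = (g k).1 i := by
    intro k i hi; rw [hg k]; exact (star (g k).1 (g k).2).choose_spec.2.1 i hi
  have P2' : ∀ k, (g (k + 1)).1 (g k).2 = true := by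
    intro k; rw [hg k]; exact (star (g k).1 (g k).2).choose_spec.2.2.1
  have P3 : ∀ k, ¬ Q (str (g (k + 1)).1 (g (k + 1)).2) := by
    intro k; rw [hg k]; exact (star (g k).1 (g k).2).choose_spec.2.2.2
  have mono : ∀ k l, k ≤ l → (g k).2 ≤ (g l).2 := by
    intro k l hkl
    induction l, hkl using Nat.le_induction with
    | base => exact le_rfl
    | succ l hkl ih => have := P1 l; omega
  have kle : ∀ k, k ≤ (g k).2 := by
    intro k
    induction k with
    | zero => exact Nat.zero_le _
    | succ k ih => have := P1 k; omega
  have stable : ∀ k l, k ≤ l → ∀ i, i < (g k).2 → (g l).1 i = (g k).1 i := by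
    intro k l hkl
    induction l, hkl using Nat.le_induction with
    | base => intro i _; rfl
    | succ l hkl ih =>
        intro i hi
        have h2 : i < (g l).2 := lt_of_lt_of_le hi (mono k l hkl)
        rw [P2 l i h2]; exact ih i hi
  set xs : ℕ → Bool := fun i => (g (i + 1)).1 i with hxs
  have claim : ∀ k i, i < (g k).2 → xs i = (g k).1 i := by
    intro k i hi
    have hi1 : i < (g (i + 1)).2 := lt_of_lt_of_le (Nat.lt_succ_self i) (kle (i + 1))
    rcases le_total k (i + 1) with h | h
    · exact stable k (i + 1) h i hi
    · exact (stable (i + 1) k h i hi1).symm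
  have hD : D xs := by
    intro m
    refine ⟨(g m).2, le_trans (kle m) (le_refl _), ?_⟩
    have hi : (g m).2 < (g (m + 1)).2 := P1 m
    rw [claim (m + 1) (g m).2 hi]
    exact P2' m
  obtain ⟨N, hN⟩ := H1 xs hD
  have hn : N ≤ (g (N + 1)).2 := le_trans (Nat.le_succ N) (kle (N + 1))
  have hQ := hN _ hn
  have heq : str xs (g (N + 1)).2 = str (g (N + 1)).1 (g (N + 1)).2 :=
    str_agree fun i hi => claim (N + 1) i hi
  rw [heq] at hQ
  exact P3 N hQ

end JungAux

namespace JungAux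

open scoped Classical

set_option synthInstance.maxHeartbeats 1000000
set_option maxHeartbeats 1000000

noncomputable abbrev L := lp (fun _ : ℕ => ℝ) ⊤

noncomputable def sgn (x : ℕ → Bool) : ℝ := if D x then 1 else -1

lemma abs_sgn (x : ℕ → Bool) : |sgn x| = 1 := by
  unfold sgn; split <;> simp

def onB (x : ℕ → Bool) (k : ℕ) : Prop := ∃ n, k = code x n

noncomputable def Fseq (x : ℕ → Bool) (k : ℕ) : ℝ :=
  if onB x k then sgn x else 0

lemma abs_Fseq_le (x : ℕ → Bool) (k : ℕ) : |Fseq x k| ≤ 1 := by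
  unfold Fseq; split
  · exact le_of_eq (abs_sgn x)
  · simp

noncomputable def Fx (x : ℕ → Bool) : L :=
  ⟨Fseq x, memℓp_infty ⟨1, by
    rintro r ⟨k, rfl⟩
    simpa [Real.norm_eq_abs] using abs_Fseq_le x k⟩⟩

lemma Fx_apply (x : ℕ → Bool) (k : ℕ) : Fx x k = Fseq x k := rfl

/-- Quotient norm bound from an eventual pointwise bound. -/
lemma qle (f : L) {C : ℝ} (hC : 0 ≤ C) (K : ℕ) (h : ∀ k, K ≤ k → |f k| ≤ C) :
    ‖(Submodule.Quotient.mk f : L ⧸ c0)‖ ≤ C := by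
  have hmem : Memℓp (fun k => if k < K then f k else 0) ⊤ := by
    apply memℓp_infty
    refine ⟨‖f‖, ?_⟩
    rintro r ⟨k, rfl⟩
    simp only
    split
    · exact lp.norm_apply_le_norm ENNReal.top_ne_zero f k
    · simp
  set t : L := ⟨fun k => if k < K then f k else 0, hmem⟩ with ht
  have htapp : ∀ k, t k = if k < K then f k else 0 := fun k => rfl
  have htc0 : t ∈ c0 := by
    show Filter.Tendsto (⇑t) Filter.atTop (nhds 0)
    have hev : (⇑t) =ᶠ[Filter.atTop] (fun _ => (0 : ℝ)) := by
      filter_upwards [Filter.eventually_ge_atTop K] with k hk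
      exact if_neg (by omega)
    exact hev.tendsto
  have hmk : (Submodule.Quotient.mk f : L ⧸ c0) = Submodule.Quotient.mk (f - t) := by
    rw [Submodule.Quotient.mk_sub, (Submodule.Quotient.mk_eq_zero c0).2 htc0, sub_zero]
  rw [hmk]
  refine le_trans (Submodule.Quotient.norm_mk_le c0 _) ?_
  apply lp.norm_le_of_forall_le hC
  intro k
  have hsub : (f - t) k = f k - t k := by
    rw [lp.coeFn_sub]; rfl
  rw [Real.norm_eq_abs, hsub]
  by_cases hk : k < K
  · rw [htapp k, if_pos hk]
    simpa using hC
  · rw [htapp k, if_neg hk, sub_zero]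
    exact h k (by omega)

/-- Quotient norm lower bound from an infinitely-often pointwise lower bound. -/
lemma qge (f : L) {C : ℝ} (h : ∀ m, ∃ k, m ≤ k ∧ C ≤ |f k|) :
    C ≤ ‖(Submodule.Quotient.mk f : L ⧸ c0)‖ := by
  by_contra hlt
  push_neg at hlt
  obtain ⟨g, hgmk, hgn⟩ := Submodule.Quotient.norm_mk_lt
    (Submodule.Quotient.mk f : L ⧸ c0) (sub_pos.2 hlt)
  have hgC : ‖g‖ < C := by linarith
  have hdiff : g - f ∈ c0 := (Submodule.Quotient.eq c0).1 hgmk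
  have htend : Filter.Tendsto (⇑(g - f)) Filter.atTop (nhds 0) := hdiff
  set ε : ℝ := (C - ‖g‖) / 2 with hε
  have hεpos : 0 < ε := by rw [hε]; linarith
  have hev : ∀ᶠ k in Filter.atTop, |(g - f) k| < ε := by
    have := Metric.tendsto_atTop.1 htend ε hεpos
    obtain ⟨M, hM⟩ := this
    filter_upwards [Filter.eventually_ge_atTop M] with k hk
    have := hM k hk
    rw [Real.dist_eq, sub_zero] at this
    exact this
  obtain ⟨M, hM⟩ := Filter.eventually_atTop.1 hev
  obtain ⟨k, hkM, hkC⟩ := h M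
  have hsub : (g - f) k = g k - f k := by rw [lp.coeFn_sub]; rfl
  have h1 : |g k - f k| < ε := by rw [← hsub]; exact hM k hkM
  have h2 : |g k| ≤ ‖g‖ := by
    simpa [Real.norm_eq_abs] using lp.norm_apply_le_norm ENNReal.top_ne_zero g k
  have h3 : |f k| - |g k| ≤ |g k - f k| := by
    have := abs_sub_abs_le_abs_sub (f k) (g k)
    rw [abs_sub_comm] at this
    linarith
  linarith [abs_nonneg (g k - f k)]

/-- Any two points of the family are at quotient distance at most 1. -/
lemma dist_mk_le_one (x y : ℕ → Bool) :
    ‖(Submodule.Quotient.mk (Fx x - Fx y) : L ⧸ c0)‖ ≤ 1 := by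
  obtain ⟨K, hK⟩ : ∃ K, ∀ k, K ≤ k → |Fseq x k - Fseq y k| ≤ 1 := by
    by_cases hsgn : sgn x = sgn y
    · refine ⟨0, fun k _ => ?_⟩
      unfold Fseq
      split <;> split <;> simp [hsgn, abs_sgn, sub_self]
    · have hxy : x ≠ y := by rintro rfl; exact hsgn rfl
      obtain ⟨j, hj⟩ : ∃ j, x j ≠ y j := by
        by_contra hcon; push_neg at hcon; exact hxy (funext hcon)
      refine ⟨(Finset.range (j + 1)).sup (code x) + 1, fun k hk => ?_⟩
      unfold Fseq
      by_cases h1 : onB x k <;> by_cases h2 : onB y k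
      · exfalso
        obtain ⟨n, rfl⟩ := h1
        obtain ⟨n', hn'⟩ := h2
        have hstr : str x n = str y n' := Encodable.encode_injective hn'
        have hnn' : n = n' := by
          have := congrArg List.length hstr; simpa [str_length] using this
        subst hnn'
        have hagree := agree_of_str hstr
        have hnj : n ≤ j := by
          by_contra hgt
          exact hj (hagree j (by omega))
        have : code x n ≤ (Finset.range (j + 1)).sup (code x) :=
          Finset.le_sup (Finset.mem_range.2 (by omega))
        omega
      · rw [if_pos h1, if_neg h2, sub_zero]
        exact le_of_eq (abs_sgn x)
      · rw [if_neg h1, if_pos h2, zero_sub, abs_neg]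
        exact le_of_eq (abs_sgn y)
      · rw [if_neg h1, if_neg h2, sub_zero]
        simp
  apply qle (Fx x - Fx y) zero_le_one K
  intro k hk
  have happ : (Fx x - Fx y) k = Fseq x k - Fseq y k := by rw [lp.coeFn_sub]; rfl
  rw [happ]
  exact hK k hk

/-- For any potential center `b` and any `r < 1`, some point of the family is farther
than `r` from `b` in the quotient. -/
lemma exists_far (b : L) {r : ℝ} (hr : r < 1) :
    ∃ x : ℕ → Bool, r < ‖(Submodule.Quotient.mk (Fx x - b) : L ⧸ c0)‖ := by
  by_contra hcon
  push_neg at hcon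
  set r' : ℝ := (1 + r) / 2 with hr'
  have hr'1 : r' < 1 := by rw [hr']; linarith
  have hrr' : r < r' := by rw [hr']; linarith
  have key : ∀ x : ℕ → Bool, ∃ m, ∀ k, m ≤ k → |(Fx x - b) k| < r' := by
    intro x
    have hno : ¬ (∀ m, ∃ k, m ≤ k ∧ r' ≤ |(Fx x - b) k|) := fun hall =>
      absurd (qge _ hall) (not_le.2 (lt_of_le_of_lt (hcon x) hrr'))
    push_neg at hno
    exact hno
  have happ : ∀ (x : ℕ → Bool) (k : ℕ), (Fx x - b) k = Fseq x k - b k := by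
    intro x k; rw [lp.coeFn_sub]; rfl
  apply combinatorial (fun s => 0 < b (Encodable.encode s))
  · intro x hDx
    have hsgn : sgn x = 1 := if_pos hDx
    obtain ⟨m, hm⟩ := key x
    obtain ⟨N, hN⟩ := eventually_code_ge x m
    refine ⟨N, fun n hn => ?_⟩
    have hk := hm (code x n) (hN n hn)
    rw [happ] at hk
    have hFs : Fseq x (code x n) = 1 := by
      unfold Fseq; rw [if_pos ⟨n, rfl⟩, hsgn]
    rw [hFs] at hk
    have := (abs_lt.1 hk).2
    show 0 < b (Encodable.encode (str x n))
    have hcode : code x n = Encodable.encode (str x n) := rfl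
    rw [← hcode]
    linarith
  · intro x hDx
    have hsgn : sgn x = -1 := if_neg hDx
    obtain ⟨m, hm⟩ := key x
    obtain ⟨N, hN⟩ := eventually_code_ge x m
    refine ⟨N, fun n hn => ?_⟩
    have hk := hm (code x n) (hN n hn)
    rw [happ] at hk
    have hFs : Fseq x (code x n) = -1 := by
      unfold Fseq; rw [if_pos ⟨n, rfl⟩, hsgn]
    rw [hFs] at hk
    have := (abs_lt.1 hk).1
    show ¬ (0 < b (Encodable.encode (str x n)))
    have hcode : code x n = Encodable.encode (str x n) := rfl
    rw [← hcode]
    intro hpos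
    linarith

end JungAux

open JungAux

set_option maxHeartbeats 2000000
set_option synthInstance.maxHeartbeats 1000000

/-- The Jung constant of `ℓ∞/c₀` equals 2; more precisely, for every `r < 1` there is
a subset of `ℓ∞/c₀` of diameter at most 1 not contained in any closed ball of radius
`r`. -/
theorem jung_linfty_mod_c0_eq_two :
    Jung ((lp (fun _ : ℕ => ℝ) ⊤) ⧸ c0) = 2 ∧
    ∀ r : ℝ, r < 1 →
      ∃ A : Set ((lp (fun _ : ℕ => ℝ) ⊤) ⧸ c0),
        Metric.diam A ≤ 1 ∧ ∀ h : (lp (fun _ : ℕ => ℝ) ⊤) ⧸ c0,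
          ¬ A ⊆ Metric.closedBall h r := by
  classical
  set A : Set (L ⧸ c0) :=
    Set.range (fun x : ℕ → Bool => (Submodule.Quotient.mk (Fx x) : L ⧸ c0)) with hA
  -- diameter at most 1
  have hdistle : ∀ p ∈ A, ∀ q ∈ A, dist p q ≤ 1 := by
    rintro _ ⟨x, rfl⟩ _ ⟨y, rfl⟩
    rw [dist_eq_norm, ← Submodule.Quotient.mk_sub]
    exact dist_mk_le_one x y
  have hAdiam : Metric.diam A ≤ 1 := Metric.diam_le_of_forall_dist_le zero_le_one hdistle
  -- A is inside the unit ball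
  have hnorm_le : ∀ p ∈ A, ‖p‖ ≤ 1 := by
    rintro _ ⟨x, rfl⟩
    refine le_trans (Submodule.Quotient.norm_mk_le c0 _) ?_
    exact lp.norm_le_of_forall_le zero_le_one
      (fun k => by simpa [Real.norm_eq_abs, Fx_apply] using abs_Fseq_le x k)
  have hball : A ⊆ Metric.closedBall 0 1 := fun p hp => by
    simpa [Metric.mem_closedBall, dist_zero_right] using hnorm_le p hp
  have hAbdd : Bornology.IsBounded A := Metric.isBounded_closedBall.subset hball
  -- no center works
  have hfar : ∀ (h : L ⧸ c0) (r : ℝ), r < 1 → ∃ p ∈ A, r < dist p h := by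
    intro h r hr
    obtain ⟨b, rfl⟩ := Submodule.Quotient.mk_surjective c0 h
    obtain ⟨x, hx⟩ := exists_far b hr
    refine ⟨_, ⟨x, rfl⟩, ?_⟩
    rwa [dist_eq_norm, ← Submodule.Quotient.mk_sub]
  -- diameter at least 1
  have hdiam_ge : (1 : ℝ) ≤ Metric.diam A := by
    set xt : ℕ → Bool := fun _ => true with hxt
    set yf : ℕ → Bool := fun _ => false with hyf
    have hDx : D xt := fun m => ⟨m, le_refl m, rfl⟩
    have hDy : ¬ D yf := by
      rintro hD; obtain ⟨n, _, hcontra⟩ := hD 0; exact Bool.false_ne_true hcontra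
    have h1 : (1 : ℝ) ≤ ‖(Submodule.Quotient.mk (Fx xt - Fx yf) : L ⧸ c0)‖ := by
      apply qge
      intro m
      obtain ⟨N, hN⟩ := eventually_code_ge xt m
      refine ⟨code xt N, hN N le_rfl, ?_⟩
      have happ : (Fx xt - Fx yf) (code xt N) = Fseq xt (code xt N) - Fseq yf (code xt N) := by
        rw [lp.coeFn_sub]; rfl
      rw [happ]
      have hx1 : Fseq xt (code xt N) = 1 := by
        unfold Fseq; rw [if_pos ⟨N, rfl⟩]; exact if_pos hDx
      rw [hx1]
      unfold Fseq
      split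
      · unfold sgn
        rw [if_neg hDy]
        norm_num
      · norm_num
    have h2 : dist (Submodule.Quotient.mk (Fx xt) : L ⧸ c0) (Submodule.Quotient.mk (Fx yf)) ≤
        Metric.diam A :=
      Metric.dist_le_diam_of_mem hAbdd ⟨xt, rfl⟩ ⟨yf, rfl⟩
    rw [dist_eq_norm, ← Submodule.Quotient.mk_sub] at h2
    linarith
  have hdiamA : Metric.diam A = 1 := le_antisymm hAdiam hdiam_ge
  -- the closure of A
  set B : Set (L ⧸ c0) := closure A with hB
  have hBdiam : Metric.diam B = 1 := by rw [hB, Metric.diam_closure]; exact hdiamA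
  have hBball : B ⊆ Metric.closedBall 0 1 :=
    closure_minimal hball Metric.isClosed_closedBall
  have hbdd0 : ∀ (S : Set (L ⧸ c0)),
      BddBelow (Set.range fun b : L ⧸ c0 => ⨆ a : S, ‖(a : L ⧸ c0) - b‖) := by
    intro S
    refine ⟨0, ?_⟩
    rintro _ ⟨b, rfl⟩
    exact Real.iSup_nonneg fun a => norm_nonneg _
  -- radius of B is 1
  have hrad_le : radius B ≤ 1 := by
    have hsup : (⨆ a : B, ‖(a : L ⧸ c0) - 0‖) ≤ 1 := by
      apply Real.iSup_le _ zero_le_one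
      rintro ⟨a, ha⟩
      have := Metric.mem_closedBall.1 (hBball ha)
      rw [dist_zero_right] at this
      simpa [sub_zero] using this
    exact ciInf_le_of_le (hbdd0 B) 0 hsup
  have hrad_ge : (1 : ℝ) ≤ radius B := by
    apply le_ciInf
    intro b
    by_contra hlt
    push_neg at hlt
    obtain ⟨p, hpA, hpd⟩ := hfar b _ hlt
    have hbddB : BddAbove (Set.range fun a : B => ‖(a : L ⧸ c0) - b‖) := by
      refine ⟨1 + ‖b‖, ?_⟩
      rintro _ ⟨⟨a, ha⟩, rfl⟩
      have h1 : ‖a‖ ≤ 1 := by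
        have := Metric.mem_closedBall.1 (hBball ha)
        rwa [dist_zero_right] at this
      calc ‖a - b‖ ≤ ‖a‖ + ‖b‖ := norm_sub_le a b
        _ ≤ 1 + ‖b‖ := by linarith
    have hle : ‖p - b‖ ≤ ⨆ a : B, ‖(a : L ⧸ c0) - b‖ :=
      le_ciSup hbddB (⟨p, subset_closure hpA⟩ : B)
    rw [dist_eq_norm] at hpd
    linarith
  have hradB : radius B = 1 := le_antisymm hrad_le hrad_ge
  constructor
  · -- Jung = 2
    apply IsGreatest.csSup_eq
    constructor
    · refine ⟨B, isClosed_closure, hAbdd.closure, ?_, ?_⟩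
      · rw [hBdiam]; norm_num
      · rw [hBdiam, hradB]; norm_num
    · rintro c ⟨S, _, hSbdd, hSdiam, rfl⟩
      have hSne : S.Nonempty := by
        by_contra hcontra
        rw [Set.not_nonempty_iff_eq_empty] at hcontra
        rw [hcontra, Metric.diam_empty] at hSdiam
        exact lt_irrefl 0 hSdiam
      obtain ⟨a0, ha0⟩ := hSne
      have hrle : radius S ≤ Metric.diam S := by
        have hsup : (⨆ a : S, ‖(a : L ⧸ c0) - a0‖) ≤ Metric.diam S := by
          apply Real.iSup_le _ Metric.diam_nonneg
          rintro ⟨a, ha⟩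
          rw [← dist_eq_norm]
          exact Metric.dist_le_diam_of_mem hSbdd ha ha0
        exact ciInf_le_of_le (hbdd0 S) a0 hsup
      rw [div_le_iff₀ hSdiam]
      have hrnn : 0 ≤ radius S :=
        le_ciInf fun b => Real.iSup_nonneg fun a => norm_nonneg _
      linarith
  · -- second statement
    intro r hr
    refine ⟨A, hAdiam, fun h hsub => ?_⟩
    obtain ⟨p, hpA, hpd⟩ := hfar h r hr
    have := Metric.mem_closedBall.1 (hsub hpA)
    linarith
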